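/- Let G be a torsion-free abelian group with decompositions G = D ⊕ B = A ⊕ C, where A and D are strongly separable, and both B and C have no rank-1 direct summand whose type is an extractable type of A or of D. Then D and A are mono-equivalent. -/

import Mathlib

namespace Paper

open DirectSum

/-- A subgroup is a direct summand. -/
def IsSummand {G : Type*} [AddCommGroup G] (A : AddSubgroup G) : Prop :=
  ∃ B : AddSubgroup G, IsCompl A B

/-- A group has rank one: it is nonzero and embeds in `ℚ`. -/
def IsRankOne (G : Type*) [AddCommGroup G] : Prop :=
  (∃ x : G, x ≠ 0) ∧ ∃ f : G →+ ℚ, Function.Injective f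

/-- A group is clipped if it has no rank-one direct summand. -/
def IsClipped (G : Type*) [AddCommGroup G] : Prop :=
  ¬ ∃ A : AddSubgroup G, IsSummand A ∧ IsRankOne A

/-- A group is `τ`-clipped if it has no direct summand isomorphic to the
rank-one group `τ` (a subgroup of `ℚ` representing a type). -/
def IsClippedFor (G : Type*) [AddCommGroup G] (τ : AddSubgroup ℚ) : Prop :=
  ¬ ∃ A : AddSubgroup G, IsSummand A ∧ Nonempty (A ≃+ τ)

/-- A group is completely decomposable if it is a direct sum of rank-one
groups (nonzero subgroups of `ℚ`). -/
def IsCompletelyDecomposable (G : Type*) [AddCommGroup G] : Prop :=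
  ∃ (ι : Type) (τ : ι → AddSubgroup ℚ), (∀ i, τ i ≠ ⊥) ∧ Nonempty (G ≃+ ⨁ i, τ i)

/-- A group is `τ`-homogeneous completely decomposable if it is a direct sum
of copies of the rank-one group `τ`. -/
def IsHomogeneousCD (G : Type*) [AddCommGroup G] (τ : AddSubgroup ℚ) : Prop :=
  τ ≠ ⊥ ∧ ∃ ι : Type, Nonempty (G ≃+ ⨁ _i : ι, τ)

/-- Two groups are mono-equivalent if each embeds into the other. -/
def MonoEquiv (G H : Type*) [AddCommGroup G] [AddCommGroup H] : Prop :=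
  (∃ f : G →+ H, Function.Injective f) ∧ (∃ f : H →+ G, Function.Injective f)

/-- A subgroup is pure if `n • x ∈ H` implies `n • x ∈ n • H`. -/
def IsPure {G : Type*} [AddCommGroup G] (H : AddSubgroup G) : Prop :=
  ∀ (n : ℤ) (x : G), n • x ∈ H → ∃ y ∈ H, n • y = n • x

/-- A group is strongly separable if every pure rank-one subgroup is a
direct summand. -/
def StronglySeparable (G : Type*) [AddCommGroup G] : Prop :=
  ∀ H : AddSubgroup G, IsPure H → IsRankOne H → IsSummand H

/-- The pure closure of an element: all `x` with `n • x` a multiple of `g`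
for some `n ≠ 0`. -/
def pureClosure {G : Type*} [AddCommGroup G] (g : G) : AddSubgroup G where
  carrier := {x | ∃ n : ℤ, n ≠ 0 ∧ n • x ∈ AddSubgroup.zmultiples g}
  zero_mem' := ⟨1, one_ne_zero, by simpa using (AddSubgroup.zmultiples g).zero_mem⟩
  add_mem' := by
    rintro x y ⟨n, hn, hx⟩ ⟨m, hm, hy⟩
    refine ⟨n * m, mul_ne_zero hn hm, ?_⟩
    have h : (n * m) • (x + y) = m • (n • x) + n • (m • y) := by
      rw [smul_add, mul_smul, mul_smul, smul_comm n m x]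
    rw [h]
    exact add_mem (AddSubgroup.zsmul_mem _ hx m) (AddSubgroup.zsmul_mem _ hy n)
  neg_mem' := by
    rintro x ⟨n, hn, hx⟩
    exact ⟨n, hn, by rw [smul_neg]; exact neg_mem hx⟩

/-- A group is indecomposable if it is nonzero and has no nontrivial
direct sum decomposition. -/
def IsIndecomposableGroup (G : Type*) [AddCommGroup G] : Prop :=
  (∃ x : G, x ≠ 0) ∧ ∀ A B : AddSubgroup G, IsCompl A B → A = ⊥ ∨ B = ⊥



section Aux

variable {G : Type*} [AddCommGroup G]

lemma mem_pureClosure {g x : G} :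
    x ∈ pureClosure g ↔ ∃ n : ℤ, n ≠ 0 ∧ n • x ∈ AddSubgroup.zmultiples g := Iff.rfl

lemma ratio_unique [NoZeroSMulDivisors ℤ G] {x h : G} (hx : x ≠ 0)
    {n m n' m' : ℤ} (hn : n ≠ 0) (hn' : n' ≠ 0)
    (e : n • h = m • x) (e' : n' • h = m' • x) : (m : ℚ) / n = m' / n' := by
  have key : (n' * m) • x = (n * m') • x := by
    calc (n' * m) • x = n' • (m • x) := by rw [mul_smul]
      _ = n' • (n • h) := by rw [e]
      _ = n • (n' • h) := smul_comm _ _ _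
      _ = n • (m' • x) := by rw [e']
      _ = (n * m') • x := (mul_smul _ _ _).symm
  have h2 : n' * m = n * m' := by
    have h0 : (n' * m - n * m') • x = 0 := by rw [sub_smul, key, sub_self]
    rcases smul_eq_zero.mp h0 with h | h
    · omega
    · exact absurd h hx
  rw [div_eq_div_iff (by exact_mod_cast hn) (by exact_mod_cast hn')]
  exact_mod_cast (by linarith [h2] : m * n' = m' * n)

lemma pureClosure_embeds [NoZeroSMulDivisors ℤ G] {x : G} (hx : x ≠ 0) :
    ∃ f : (pureClosure x) →+ ℚ, Function.Injective f := by
  have spec : ∀ h : pureClosure x, ∃ p : ℤ × ℤ, p.1 ≠ 0 ∧ p.1 • (h : G) = p.2 • x := by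
    rintro ⟨h, n, hn, hm⟩
    rcases AddSubgroup.mem_zmultiples_iff.mp hm with ⟨m, hm⟩
    exact ⟨(n, m), hn, hm.symm⟩
  choose p hp1 hp2 using spec
  have uniq : ∀ (h : pureClosure x) (n m : ℤ), n ≠ 0 → n • (h : G) = m • x →
      ((p h).2 : ℚ) / (p h).1 = m / n := fun h n m hn e =>
    ratio_unique hx (hp1 h) hn (hp2 h) e
  refine ⟨AddMonoidHom.mk' (fun h => ((p h).2 : ℚ) / (p h).1) ?_, ?_⟩
  · intro a b
    have e : ((p a).1 * (p b).1) • ((a : G) + (b : G)) =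
        ((p b).1 * (p a).2 + (p a).1 * (p b).2) • x := by
      have swap : ∀ (u v : ℤ) (g : G), (u * v) • g = v • (u • g) := by
        intro u v g; rw [mul_comm, mul_smul]
      rw [smul_add, add_smul, swap, hp2 a, mul_smul (p a).1 (p b).1, hp2 b,
        mul_smul, mul_smul]
    have h1 := uniq (a + b) _ _ (mul_ne_zero (hp1 a) (hp1 b)) (by exact_mod_cast e)
    show ((p (a+b)).2 : ℚ) / (p (a+b)).1 = ((p a).2 : ℚ) / (p a).1 + ((p b).2 : ℚ) / (p b).1
    rw [h1]
    have ha : ((p a).1 : ℚ) ≠ 0 := by exact_mod_cast hp1 a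
    have hb : ((p b).1 : ℚ) ≠ 0 := by exact_mod_cast hp1 b
    field_simp
    push_cast; ring
  · rw [injective_iff_map_eq_zero]
    intro h hh
    simp only [AddMonoidHom.mk'_apply] at hh
    have h2 : ((p h).2 : ℚ) = 0 := by
      rcases div_eq_zero_iff.mp hh with h' | h'
      · exact h'
      · exact absurd h' (by exact_mod_cast hp1 h)
    have h2' : (p h).2 = (0 : ℤ) := by exact_mod_cast h2
    have := hp2 h
    rw [h2', zero_smul] at this
    have hc : (h : G) = 0 := by
      rcases smul_eq_zero.mp this with h' | h'
      · exact absurd h' (hp1 h)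
      · exact h'
    exact Subtype.ext hc

lemma mem_of_smul_mem [NoZeroSMulDivisors ℤ G] {A C : AddSubgroup G}
    (hAC : IsCompl A C) {n : ℤ} (hn : n ≠ 0) {g : G} (h : n • g ∈ C) : g ∈ C := by
  have hg : g ∈ A ⊔ C := by rw [hAC.sup_eq_top]; trivial
  obtain ⟨a, haA, c, hcC, rfl⟩ := AddSubgroup.mem_sup.mp hg
  have h1 : n • a ∈ C := by
    have := C.sub_mem h (C.zsmul_mem hcC n)
    simpa [smul_add] using this
  have h2 : n • a = 0 :=
    (AddSubgroup.disjoint_def.mp hAC.disjoint) (A.zsmul_mem haA n) h1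
  have ha0 : a = 0 := by
    rcases smul_eq_zero.mp h2 with h' | h'
    · exact absurd h' hn
    · exact h'
  simpa [ha0]

lemma isCompl_map_sup {D B : AddSubgroup G} (hDB : IsCompl D B)
    {H K : AddSubgroup D} (hHK : IsCompl H K) :
    IsCompl (H.map D.subtype) ((K.map D.subtype) ⊔ B) := by
  constructor
  · rw [AddSubgroup.disjoint_def]
    intro g hg hgk
    obtain ⟨d, hdH, rfl⟩ := hg
    obtain ⟨k, hk, b, hb, hkb⟩ := AddSubgroup.mem_sup.mp hgk
    obtain ⟨d', hd'K, rfl⟩ := hk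
    have hbD : b ∈ D := by
      have : b = (d : G) - (d' : G) := by
        simp only [AddSubgroup.coe_subtype] at hkb
        rw [← hkb]; abel
      rw [this]
      exact D.sub_mem d.2 d'.2
    have hb0 : b = 0 := (AddSubgroup.disjoint_def.mp hDB.disjoint) hbD hb
    rw [hb0, add_zero] at hkb
    have hdd' : d' = d := Subtype.ext (by simpa using hkb)
    subst hdd'
    have : d' = 0 := (AddSubgroup.disjoint_def.mp hHK.disjoint) hdH hd'K
    simp [this]
  · rw [codisjoint_iff_le_sup]
    intro g _
    have hg : g ∈ D ⊔ B := by rw [hDB.sup_eq_top]; trivial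
    obtain ⟨d, hdD, b, hb, rfl⟩ := AddSubgroup.mem_sup.mp hg
    have hd : (⟨d, hdD⟩ : D) ∈ H ⊔ K := by rw [hHK.sup_eq_top]; trivial
    obtain ⟨h, hh, k, hk, hhk⟩ := AddSubgroup.mem_sup.mp hd
    have hdg : d = (h : G) + (k : G) := by
      have := congrArg (fun z : D => (z : G)) hhk
      simpa using this.symm
    rw [hdg, add_assoc]
    refine add_mem (AddSubgroup.mem_sup_left ⟨h, hh, rfl⟩)
      (AddSubgroup.mem_sup_right (add_mem (AddSubgroup.mem_sup_left ⟨k, hk, rfl⟩)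
        (AddSubgroup.mem_sup_right hb)))

lemma isCompl_addSubgroupOf {H K C : AddSubgroup G} (hHK : IsCompl H K)
    (hHC : H ≤ C) : IsCompl (H.addSubgroupOf C) (K.addSubgroupOf C) := by
  constructor
  · rw [AddSubgroup.disjoint_def]
    intro c hc1 hc2
    rw [AddSubgroup.mem_addSubgroupOf] at hc1 hc2
    exact Subtype.ext ((AddSubgroup.disjoint_def.mp hHK.disjoint) hc1 hc2)
  · rw [codisjoint_iff_le_sup]
    intro c _
    have hg : (c : G) ∈ H ⊔ K := by rw [hHK.sup_eq_top]; trivial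
    obtain ⟨h, hh, k, hk, hhk⟩ := AddSubgroup.mem_sup.mp hg
    have hkC : k ∈ C := by
      have : k = (c : G) - h := by rw [← hhk]; abel
      rw [this]; exact C.sub_mem c.2 (hHC hh)
    have : c = (⟨h, hHC hh⟩ : C) + ⟨k, hkC⟩ := Subtype.ext (by simp [hhk])
    rw [this]
    exact add_mem (AddSubgroup.mem_sup_left (by rwa [AddSubgroup.mem_addSubgroupOf]))
      (AddSubgroup.mem_sup_right (by rwa [AddSubgroup.mem_addSubgroupOf]))

lemma key_inj [NoZeroSMulDivisors ℤ G]
    (D B A C : AddSubgroup G) (hDB : IsCompl D B) (hAC : IsCompl A C)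
    (hD : StronglySeparable D)
    (hclipC : ∀ τ : AddSubgroup ℚ, τ ≠ ⊥ →
      (∃ S : AddSubgroup D, IsSummand S ∧ Nonempty (S ≃+ τ)) → IsClippedFor C τ)
    {x : G} (hxD : x ∈ D) (hxC : x ∈ C) : x = 0 := by
  by_contra hx
  set H' : AddSubgroup D := (pureClosure x).comap D.subtype with hH'def
  have memH' : ∀ d : D, d ∈ H' ↔ ∃ n : ℤ, n ≠ 0 ∧ n • (d : G) ∈ AddSubgroup.zmultiples x := by
    intro d; rfl
  have hxH' : (⟨x, hxD⟩ : D) ∈ H' :=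
    (memH' _).mpr ⟨1, one_ne_zero, by simp [AddSubgroup.mem_zmultiples x]⟩
  -- purity
  have hpure : IsPure H' := by
    intro n d hnd
    by_cases hn : n = 0
    · exact ⟨0, H'.zero_mem, by simp [hn]⟩
    · refine ⟨d, ?_, rfl⟩
      obtain ⟨k, hk, hm⟩ := (memH' _).mp hnd
      refine (memH' _).mpr ⟨k * n, mul_ne_zero hk hn, ?_⟩
      rw [mul_smul]
      simpa using hm
  -- the embedding into ℚ
  obtain ⟨f, hf⟩ := pureClosure_embeds (G := G) hx
  have hincl : ∀ h : H', ((h : D) : G) ∈ pureClosure x := fun h => h.2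
  let ι : H' →+ pureClosure x :=
    { toFun := fun h => ⟨((h : D) : G), hincl h⟩
      map_zero' := rfl
      map_add' := fun _ _ => rfl }
  have hι : Function.Injective ι := by
    intro a b hab
    have : ((a : D) : G) = ((b : D) : G) :=
      congrArg (fun z : pureClosure x => (z : G)) hab
    exact Subtype.ext (Subtype.ext this)
  let g : H' →+ ℚ := f.comp ι
  have hg : Function.Injective g := hf.comp hι
  have hrank : IsRankOne H' := by
    refine ⟨⟨⟨⟨x, hxD⟩, hxH'⟩, ?_⟩, g, hg⟩
    intro h0
    apply hx
    have := congrArg (fun z : H' => (((z : D) : G))) h0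
    simpa using this
  obtain ⟨K, hK⟩ := hD H' hpure hrank
  -- the type τ
  set τ : AddSubgroup ℚ := g.range with hτdef
  have e1 : H' ≃+ τ := AddMonoidHom.ofInjective hg -- check name
  have hτ : τ ≠ ⊥ := by
    intro hbot
    have : g ⟨⟨x, hxD⟩, hxH'⟩ ∈ τ := ⟨_, rfl⟩
    rw [hbot, AddSubgroup.mem_bot] at this
    apply hx
    have h0 : (⟨⟨x, hxD⟩, hxH'⟩ : H') = 0 := hg (by simpa using this)
    have := congrArg (fun z : H' => (((z : D) : G))) h0
    simpa using this
  have hclip := hclipC τ hτ ⟨H', ⟨K, hK⟩, ⟨e1⟩⟩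
  apply hclip
  -- H ≤ C
  have hHC : H'.map D.subtype ≤ C := by
    rintro _ ⟨d, hd, rfl⟩
    obtain ⟨n, hn, hm⟩ := (memH' _).mp hd
    obtain ⟨m, hm⟩ := AddSubgroup.mem_zmultiples_iff.mp hm
    have hnC : n • ((d : D) : G) ∈ C := by
      rw [← hm]; exact C.zsmul_mem hxC m
    exact mem_of_smul_mem hAC hn hnC
  have hcompl := isCompl_addSubgroupOf (isCompl_map_sup hDB hK) hHC
  refine ⟨(H'.map D.subtype).addSubgroupOf C, ⟨_, hcompl⟩, ⟨?_⟩⟩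
  exact ((AddSubgroup.addSubgroupOfEquivOfLe hHC).trans
    (H'.equivMapOfInjective D.subtype D.subtype_injective).symm).trans e1

/-- The projection onto `A` along `C`. -/
noncomputable def projHom {A C : AddSubgroup G} (h : IsCompl A C) : G →+ A :=
  let h' : IsCompl (AddSubgroup.toIntSubmodule A) (AddSubgroup.toIntSubmodule C) :=
    (AddSubgroup.toIntSubmodule : AddSubgroup G ≃o Submodule ℤ G).isCompl h
  { toFun := fun g => ⟨(Submodule.linearProjOfIsCompl _ _ h' g : G),
      (Submodule.linearProjOfIsCompl _ _ h' g).2⟩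
    map_zero' := by simp
    map_add' := fun a b => by
      apply Subtype.ext
      simp }

lemma projHom_eq_zero {A C : AddSubgroup G} (h : IsCompl A C) {g : G}
    (hg : projHom h g = 0) : g ∈ C := by
  have h' : IsCompl (AddSubgroup.toIntSubmodule A) (AddSubgroup.toIntSubmodule C) :=
    (AddSubgroup.toIntSubmodule : AddSubgroup G ≃o Submodule ℤ G).isCompl h
  have : (Submodule.linearProjOfIsCompl _ _ h' g : G) = 0 := congrArg Subtype.val hg
  have h0 : Submodule.linearProjOfIsCompl _ _ h' g = 0 := Subtype.ext this
  exact (Submodule.linearProjOfIsCompl_apply_eq_zero_iff h').mp h0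

end Aux

/-- With `G = D ⊕ B = A ⊕ C`, `A`, `D` strongly separable, and `B`, `C`
clipped for every extractable type of `A` or `D`, the groups `D` and `A` are
mono-equivalent. -/
theorem statement1 (G : Type*) [AddCommGroup G] [NoZeroSMulDivisors ℤ G]
    (D B A C : AddSubgroup G) (hDB : IsCompl D B) (hAC : IsCompl A C)
    (hD : StronglySeparable D) (hA : StronglySeparable A)
    (hclip : ∀ τ : AddSubgroup ℚ, τ ≠ ⊥ →
      ((∃ S : AddSubgroup A, IsSummand S ∧ Nonempty (S ≃+ τ)) ∨
       (∃ S : AddSubgroup D, IsSummand S ∧ Nonempty (S ≃+ τ))) →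
      IsClippedFor B τ ∧ IsClippedFor C τ) :
    MonoEquiv D A := by
  constructor
  · -- D embeds in A via projection along C
    have hinj := fun {x} hxD hxC => key_inj D B A C hDB hAC hD
      (fun τ hτ hex => (hclip τ hτ (Or.inr hex)).2) (x := x) hxD hxC
    refine ⟨(projHom hAC).comp D.subtype, ?_⟩
    rw [injective_iff_map_eq_zero]
    intro d hd
    exact Subtype.ext (hinj d.2 (projHom_eq_zero hAC hd))
  · have hinj := fun {x} hxA hxB => key_inj A C D B hAC hDB hA
      (fun τ hτ hex => (hclip τ hτ (Or.inl hex)).1) (x := x) hxA hxB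
    refine ⟨(projHom hDB).comp A.subtype, ?_⟩
    rw [injective_iff_map_eq_zero]
    intro a ha
    exact Subtype.ext (hinj a.2 (projHom_eq_zero hDB ha))

end Paper
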